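/- arXiv:2305.15267 — 3 statements merged into one kernel-verified Lean document; each statement's English description precedes it below -/
import Mathlib

section
/- With the setup below, the following change-of-variables identity for the Fisher divergence holds (as an equality of integrals of nonnegative functions, in [0,∞]): D_F(p_x ‖ p_0) = ∫_{ℝ^D} p_{x_j}(y) · (1/2) · ‖ J_T(T⁻¹(y))ᵀ ∇_y log( p_{x_j}(y)/p_j(y) ) ‖² dy, where D_F(p_x ‖ p_0) = ∫_{ℝ^D} p_x(x) · (1/2) · ‖∇_x log(p_x(x)/p_0(x))‖² dx. -/
open MeasureTheory

section Aux

variable {ι : Type*} [Fintype ι] [DecidableEq ι]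

lemma contDiff_det_pi {n : ℕ∞} :
    ContDiff ℝ n (fun M : ι → ι → ℝ => Matrix.det (Matrix.of M)) := by
  classical
  simp_rw [Matrix.det_apply]
  refine ContDiff.sum fun σ _ => ?_
  simp_rw [Units.smul_def, zsmul_eq_mul]
  refine ContDiff.mul contDiff_const ?_
  refine contDiff_prod fun i _ => ?_
  have h1 : ContDiff ℝ n (fun M : ι → ι → ℝ => M (σ i)) :=
    contDiff_pi.1 contDiff_id (σ i)
  exact contDiff_pi.1 h1 i

lemma contDiff_clm_det {E : Type*} [NormedAddCommGroup E] [NormedSpace ℝ E]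
    [FiniteDimensional ℝ E] {n : ℕ∞} :
    ContDiff ℝ n (fun f : E →L[ℝ] E => f.det) := by
  classical
  set b := Module.finBasis ℝ E with hb
  have hg : ContDiff ℝ n (fun f : E →L[ℝ] E => fun i j => b.coord i (f (b j))) := by
    refine contDiff_pi.2 fun i => contDiff_pi.2 fun j => ?_
    exact (LinearMap.toContinuousLinearMap (b.coord i)).contDiff.comp
      (ContinuousLinearMap.apply ℝ E (b j)).contDiff
  have key : (fun f : E →L[ℝ] E => f.det)
      = fun f => Matrix.det (Matrix.of fun i j => b.coord i (f (b j))) := by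
    funext f
    have h2 : Matrix.of (fun i j => b.coord i (f (b j)))
        = LinearMap.toMatrix b b (f : E →ₗ[ℝ] E) := by
      ext i j
      simp [LinearMap.toMatrix_apply, Module.Basis.coord_apply]
    rw [h2, LinearMap.det_toMatrix]
  rw [key]
  exact contDiff_det_pi.comp hg

lemma gradient_comp_adjoint {E : Type*} [NormedAddCommGroup E] [InnerProductSpace ℝ E]
    [CompleteSpace E] (φ : E → ℝ) (T : E → E) (x : E)
    (hφ : DifferentiableAt ℝ φ (T x)) (hT : DifferentiableAt ℝ T x) :
    gradient (φ ∘ T) x = ContinuousLinearMap.adjoint (fderiv ℝ T x) (gradient φ (T x)) := by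
  have h2 : HasFDerivAt φ ((InnerProductSpace.toDual ℝ E) (gradient φ (T x))) (T x) :=
    hasGradientAt_iff_hasFDerivAt.1 hφ.hasGradientAt
  have h3 := h2.comp x hT.hasFDerivAt
  have h4 : ((InnerProductSpace.toDual ℝ E) (gradient φ (T x))).comp (fderiv ℝ T x)
      = (InnerProductSpace.toDual ℝ E)
          (ContinuousLinearMap.adjoint (fderiv ℝ T x) (gradient φ (T x))) := by
    ext v
    simp [InnerProductSpace.toDual_apply_apply, ContinuousLinearMap.adjoint_inner_left]
  rw [h4] at h3
  exact (hasGradientAt_iff_hasFDerivAt.2 h3).gradient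

lemma clm_det_comp {E : Type*} [NormedAddCommGroup E] [NormedSpace ℝ E]
    (A B : E →L[ℝ] E) : (A.comp B).det = A.det * B.det := by
  simp only [ContinuousLinearMap.det, ContinuousLinearMap.coe_comp, LinearMap.det_comp]
  exact LinearMap.det_comp (A : E →ₗ[ℝ] E) (B : E →ₗ[ℝ] E)

end Aux

/-- **Lemma A4.** With `T = g_j ∘ ⋯ ∘ g_1` and `H = g_L ∘ ⋯ ∘ g_{j+1}` C²
diffeomorphisms of ℝ^D, prior density `p_u`, model densities
`p_0(x) = p_u(H(T x))·|det J_{H∘T}(x)|` and `p_j(y) = p_u(H y)·|det J_H(y)|`,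
data density `p_x` and pushforward density `p_{x_j}(y) = p_x(T⁻¹ y)·|det J_{T⁻¹}(y)|`,
the Fisher divergence satisfies the change-of-variables identity (in `[0,∞]`):
`D_F(p_x ‖ p_0) = ∫ p_{x_j}(y) · ½ ‖J_T(T⁻¹ y)ᵀ ∇_y log(p_{x_j}(y)/p_j(y))‖² dy`. -/
theorem stmt_2 {D : ℕ} (hD : 1 ≤ D)
    (T Tinv H Hinv : EuclideanSpace ℝ (Fin D) → EuclideanSpace ℝ (Fin D))
    (hT : ContDiff ℝ 2 T) (hTinv : ContDiff ℝ 2 Tinv)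
    (hTleft : Function.LeftInverse Tinv T) (hTright : Function.RightInverse Tinv T)
    (hH : ContDiff ℝ 2 H) (hHinv : ContDiff ℝ 2 Hinv)
    (hHleft : Function.LeftInverse Hinv H) (hHright : Function.RightInverse Hinv H)
    (pu : EuclideanSpace ℝ (Fin D) → ℝ)
    (hpu_pos : ∀ u, 0 < pu u) (hpu_smooth : ContDiff ℝ 1 pu)
    (hpu_int : ∫ u, pu u = 1)
    (px : EuclideanSpace ℝ (Fin D) → ℝ)
    (hpx_pos : ∀ x, 0 < px x) (hpx_smooth : ContDiff ℝ 1 px)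
    (hpx_int : ∫ x, px x = 1)
    (p0 pj pxj : EuclideanSpace ℝ (Fin D) → ℝ)
    (hp0 : ∀ x, p0 x = pu (H (T x)) * |(fderiv ℝ (H ∘ T) x).det|)
    (hpj : ∀ y, pj y = pu (H y) * |(fderiv ℝ H y).det|)
    (hpxj : ∀ y, pxj y = px (Tinv y) * |(fderiv ℝ Tinv y).det|) :
    ∫⁻ x, ENNReal.ofReal
        (px x * ((1 : ℝ) / 2) * ‖gradient (fun z => Real.log (px z / p0 z)) x‖ ^ 2) =
      ∫⁻ y, ENNReal.ofReal
        (pxj y * ((1 : ℝ) / 2) *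
          ‖ContinuousLinearMap.adjoint (fderiv ℝ T (Tinv y))
              (gradient (fun z => Real.log (pxj z / pj z)) y)‖ ^ 2) := by
  classical
  have h12 : ((1 : ℕ) : ℕ∞) + 1 ≤ 2 := by norm_num
  have hTd : Differentiable ℝ T := hT.differentiable two_ne_zero
  have hTinvd : Differentiable ℝ Tinv := hTinv.differentiable two_ne_zero
  have hHd : Differentiable ℝ H := hH.differentiable two_ne_zero
  have hHinvd : Differentiable ℝ Hinv := hHinv.differentiable two_ne_zero
  have hpxd : Differentiable ℝ px := hpx_smooth.differentiable one_ne_zero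
  have hpud : Differentiable ℝ pu := hpu_smooth.differentiable one_ne_zero
  -- composition of derivatives
  have hcomp : ∀ (F G : EuclideanSpace ℝ (Fin D) → EuclideanSpace ℝ (Fin D)),
      Differentiable ℝ F → Differentiable ℝ G → ∀ x,
      fderiv ℝ (G ∘ F) x = (fderiv ℝ G (F x)).comp (fderiv ℝ F x) := by
    intro F G hF hG x
    exact fderiv_comp x (hG (F x)) (hF x)
  have hTinvT : ∀ x, ((fderiv ℝ Tinv (T x)).comp (fderiv ℝ T x)).det = 1 := by
    intro x
    have hid : (Tinv ∘ T) = id := funext hTleft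
    have h := (hcomp T Tinv hTd hTinvd x).symm
    rw [hid, fderiv_id] at h
    rw [h]
    simp [ContinuousLinearMap.det]
  have hTTinv : ∀ y, ((fderiv ℝ T (Tinv y)).comp (fderiv ℝ Tinv y)).det = 1 := by
    intro y
    have hid : (T ∘ Tinv) = id := funext hTright
    have h := (hcomp Tinv T hTinvd hTd y).symm
    rw [hid, fderiv_id] at h
    rw [h]
    simp [ContinuousLinearMap.det]
  have hHinvH : ∀ y, ((fderiv ℝ Hinv (H y)).comp (fderiv ℝ H y)).det = 1 := by
    intro y
    have hid : (Hinv ∘ H) = id := funext hHleft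
    have h := (hcomp H Hinv hHd hHinvd y).symm
    rw [hid, fderiv_id] at h
    rw [h]
    simp [ContinuousLinearMap.det]
  have hdetT_ne : ∀ x, (fderiv ℝ T x).det ≠ 0 := by
    intro x
    have := hTinvT x
    rw [clm_det_comp] at this
    exact right_ne_zero_of_mul_eq_one this
  have hdetTinv_ne : ∀ y, (fderiv ℝ Tinv y).det ≠ 0 := by
    intro y
    have := hTTinv y
    rw [clm_det_comp] at this
    exact right_ne_zero_of_mul_eq_one this
  have hdetH_ne : ∀ y, (fderiv ℝ H y).det ≠ 0 := by
    intro y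
    have := hHinvH y
    rw [clm_det_comp] at this
    exact right_ne_zero_of_mul_eq_one this
  have hdetTinvT : ∀ x, (fderiv ℝ Tinv (T x)).det = ((fderiv ℝ T x).det)⁻¹ := by
    intro x
    have := hTinvT x
    rw [clm_det_comp] at this
    exact eq_inv_of_mul_eq_one_left this
  -- positivity
  have hpxj_pos : ∀ y, 0 < pxj y := by
    intro y
    rw [hpxj y]
    exact mul_pos (hpx_pos _) (abs_pos.2 (hdetTinv_ne y))
  have hpj_pos : ∀ y, 0 < pj y := by
    intro y
    rw [hpj y]
    exact mul_pos (hpu_pos _) (abs_pos.2 (hdetH_ne y))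
  -- differentiability of pxj, pj
  have hdetTinv_diff : Differentiable ℝ (fun y => (fderiv ℝ Tinv y).det) :=
    (contDiff_clm_det.comp (hTinv.fderiv_right (m := 1) (by norm_num))).differentiable (by norm_num)
  have hdetH_diff : Differentiable ℝ (fun y => (fderiv ℝ H y).det) :=
    (contDiff_clm_det.comp (hH.fderiv_right (m := 1) (by norm_num))).differentiable (by norm_num)
  have hpxj_diff : ∀ y, DifferentiableAt ℝ pxj y := by
    intro y
    rw [(funext hpxj : pxj = fun y => px (Tinv y) * |(fderiv ℝ Tinv y).det|)]
    exact ((hpxd _).comp y (hTinvd y)).mul ((hdetTinv_diff y).abs (hdetTinv_ne y))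
  have hpj_diff : ∀ y, DifferentiableAt ℝ pj y := by
    intro y
    rw [(funext hpj : pj = fun y => pu (H y) * |(fderiv ℝ H y).det|)]
    exact ((hpud _).comp y (hHd y)).mul ((hdetH_diff y).abs (hdetH_ne y))
  set φ : EuclideanSpace ℝ (Fin D) → ℝ := fun z => Real.log (pxj z / pj z) with hφ
  have hφ_diff : ∀ y, DifferentiableAt ℝ φ y := by
    intro y
    have hdiv : DifferentiableAt ℝ (fun z => pxj z / pj z) y := by
      simp only [div_eq_mul_inv]
      exact (hpxj_diff y).mul ((hpj_diff y).inv (hpj_pos y).ne')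
    exact hdiv.log (div_ne_zero (hpxj_pos y).ne' (hpj_pos y).ne')
  -- ratio identity
  have hratio : ∀ z, px z / p0 z = pxj (T z) / pj (T z) := by
    intro z
    rw [hpxj (T z), hpj (T z), hp0 z, hTleft z, hcomp T H hTd hHd z, clm_det_comp,
      hdetTinvT z, abs_mul, abs_inv]
    have ha : |(fderiv ℝ T z).det| ≠ 0 := abs_ne_zero.2 (hdetT_ne z)
    have hh : |(fderiv ℝ H (T z)).det| ≠ 0 := abs_ne_zero.2 (hdetH_ne (T z))
    have hu : pu (H (T z)) ≠ 0 := (hpu_pos _).ne'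
    field_simp
  have hlog : (fun z => Real.log (px z / p0 z)) = φ ∘ T := by
    funext z
    simp only [Function.comp_apply, hφ]
    rw [hratio z]
  have hgrad : ∀ x, gradient (fun z => Real.log (px z / p0 z)) x
      = ContinuousLinearMap.adjoint (fderiv ℝ T x) (gradient φ (T x)) := by
    intro x
    rw [hlog]
    exact gradient_comp_adjoint φ T x (hφ_diff (T x)) (hTd x)
  -- change of variables
  set g : EuclideanSpace ℝ (Fin D) → ENNReal := fun y => ENNReal.ofReal
    (pxj y * ((1 : ℝ) / 2) *
      ‖ContinuousLinearMap.adjoint (fderiv ℝ T (Tinv y))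
          (gradient φ y)‖ ^ 2) with hg
  have hcov := lintegral_image_eq_lintegral_abs_det_fderiv_mul volume MeasurableSet.univ
      (fun x _ => (hTd x).hasFDerivAt.hasFDerivWithinAt) hTleft.injective.injOn g
  rw [Set.image_univ, hTright.surjective.range_eq, Measure.restrict_univ] at hcov
  rw [hcov]
  refine lintegral_congr fun x => ?_
  rw [hg]
  simp only
  rw [← ENNReal.ofReal_mul (abs_nonneg _)]
  congr 1
  rw [hgrad x, hpxj (T x), hTleft x, hdetTinvT x, abs_inv]
  have ha : |(fderiv ℝ T x).det| ≠ 0 := abs_ne_zero.2 (hdetT_ne x)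
  field_simp
end

section
/- With the setup below, D_F(p_{x_j} ‖ p_j) = 0 if and only if D_F(p_x ‖ p_0) = 0; that is, ∫_{ℝ^D} p_{x_j}(y) · (1/2) · ‖∇_y log(p_{x_j}(y)/p_j(y))‖² dy = 0 holds exactly when ∫_{ℝ^D} p_x(x) · (1/2) · ‖∇_x log(p_x(x)/p_0(x))‖² dx = 0. -/
open MeasureTheory

/-- **Proposition 4.1 (MaP).** With `T = g_j ∘ ⋯ ∘ g_1` and `H = g_L ∘ ⋯ ∘ g_{j+1}` C²
diffeomorphisms of ℝ^D, prior density `p_u`, model densities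
`p_0(x) = p_u(H(T x))·|det J_{H∘T}(x)|` and `p_j(y) = p_u(H y)·|det J_H(y)|`,
data density `p_x` and pushforward density `p_{x_j}(y) = p_x(T⁻¹ y)·|det J_{T⁻¹}(y)|`,
the Fisher divergence `D_F(p_{x_j} ‖ p_j)` vanishes iff `D_F(p_x ‖ p_0)` vanishes. -/
theorem stmt_3 {D : ℕ} (hD : 1 ≤ D)
    (T Tinv H Hinv : EuclideanSpace ℝ (Fin D) → EuclideanSpace ℝ (Fin D))
    (hT : ContDiff ℝ 2 T) (hTinv : ContDiff ℝ 2 Tinv)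
    (hTleft : Function.LeftInverse Tinv T) (hTright : Function.RightInverse Tinv T)
    (hH : ContDiff ℝ 2 H) (hHinv : ContDiff ℝ 2 Hinv)
    (hHleft : Function.LeftInverse Hinv H) (hHright : Function.RightInverse Hinv H)
    (pu : EuclideanSpace ℝ (Fin D) → ℝ)
    (hpu_pos : ∀ u, 0 < pu u) (hpu_smooth : ContDiff ℝ 1 pu)
    (hpu_int : ∫ u, pu u = 1)
    (px : EuclideanSpace ℝ (Fin D) → ℝ)
    (hpx_pos : ∀ x, 0 < px x) (hpx_smooth : ContDiff ℝ 1 px)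
    (hpx_int : ∫ x, px x = 1)
    (p0 pj pxj : EuclideanSpace ℝ (Fin D) → ℝ)
    (hp0 : ∀ x, p0 x = pu (H (T x)) * |(fderiv ℝ (H ∘ T) x).det|)
    (hpj : ∀ y, pj y = pu (H y) * |(fderiv ℝ H y).det|)
    (hpxj : ∀ y, pxj y = px (Tinv y) * |(fderiv ℝ Tinv y).det|) :
    (∫⁻ y, ENNReal.ofReal
        (pxj y * ((1 : ℝ) / 2) * ‖gradient (fun z => Real.log (pxj z / pj z)) y‖ ^ 2) = 0) ↔
      (∫⁻ x, ENNReal.ofReal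
        (px x * ((1 : ℝ) / 2) * ‖gradient (fun z => Real.log (px z / p0 z)) x‖ ^ 2) = 0) := by

  -- differentiability
  have hTd : Differentiable ℝ T := hT.differentiable two_ne_zero
  have hTinvd : Differentiable ℝ Tinv := hTinv.differentiable two_ne_zero
  have hHd : Differentiable ℝ H := hH.differentiable two_ne_zero
  have hHinvd : Differentiable ℝ Hinv := hHinv.differentiable two_ne_zero
  -- chain rule for inverses
  have hcomp : ∀ (A B : EuclideanSpace ℝ (Fin D) → EuclideanSpace ℝ (Fin D)), Function.LeftInverse A B → Differentiable ℝ A →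
      Differentiable ℝ B → ∀ x, (fderiv ℝ A (B x)).comp (fderiv ℝ B x) =
        ContinuousLinearMap.id ℝ (EuclideanSpace ℝ (Fin D)) := by
    intro A B hAB hA hB x
    have h1 : fderiv ℝ (A ∘ B) x = (fderiv ℝ A (B x)).comp (fderiv ℝ B x) :=
      fderiv_comp x (hA _) (hB x)
    have h2 : A ∘ B = id := funext hAB
    rw [h2, fderiv_id] at h1
    exact h1.symm
  have detcomp : ∀ (A B : EuclideanSpace ℝ (Fin D) →L[ℝ] EuclideanSpace ℝ (Fin D)), (A.comp B).det = A.det * B.det := by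
    intro A B
    simp only [ContinuousLinearMap.det, ContinuousLinearMap.coe_comp, LinearMap.det_comp]
    exact LinearMap.det_comp _ _
  have detone : ∀ (A B : EuclideanSpace ℝ (Fin D) → EuclideanSpace ℝ (Fin D)), Function.LeftInverse A B → Differentiable ℝ A →
      Differentiable ℝ B → ∀ x, (fderiv ℝ A (B x)).det * (fderiv ℝ B x).det = 1 := by
    intro A B hAB hA hB x
    have h := congrArg ContinuousLinearMap.det (hcomp A B hAB hA hB x)
    rw [detcomp] at h
    simpa [ContinuousLinearMap.det, LinearMap.det_id] using h
  have hdetT := detone Tinv T hTleft hTinvd hTd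
  have hdetTinv := detone T Tinv hTright hTd hTinvd
  have hdetH := detone Hinv H hHleft hHinvd hHd
  have hdetT_ne : ∀ x, (fderiv ℝ T x).det ≠ 0 := fun x => right_ne_zero_of_mul_eq_one (hdetT x)
  have hdetTinv_ne : ∀ y, (fderiv ℝ Tinv y).det ≠ 0 := fun y =>
    right_ne_zero_of_mul_eq_one (hdetTinv y)
  have hdetH_ne : ∀ y, (fderiv ℝ H y).det ≠ 0 := fun y => right_ne_zero_of_mul_eq_one (hdetH y)
  -- positivity of densities
  have hpxj_pos : ∀ y, 0 < pxj y := by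
    intro y; rw [hpxj]; exact mul_pos (hpx_pos _) (abs_pos.2 (hdetTinv_ne y))
  -- the two log-ratios agree under T
  set F : EuclideanSpace ℝ (Fin D) → ℝ := fun z => Real.log (pxj z / pj z) with hF
  set G : EuclideanSpace ℝ (Fin D) → ℝ := fun z => Real.log (px z / p0 z) with hG
  have hHT : ∀ x, (fderiv ℝ (H ∘ T) x).det = (fderiv ℝ H (T x)).det * (fderiv ℝ T x).det := by
    intro x
    rw [fderiv_comp x (hHd _) (hTd x), detcomp]
  have hGF : ∀ x, G x = F (T x) := by
    intro x
    have hratio : px x / p0 x = pxj (T x) / pj (T x) := by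
      rw [hpxj, hpj, hp0, hHT, hTleft x]
      have h1 : (fderiv ℝ Tinv (T x)).det = ((fderiv ℝ T x).det)⁻¹ :=
        eq_inv_of_mul_eq_one_left (hdetT x)
      rw [h1, abs_mul, abs_inv]
      have h2 : |(fderiv ℝ T x).det| ≠ 0 := abs_ne_zero.2 (hdetT_ne x)
      have h3 : |(fderiv ℝ H (T x)).det| ≠ 0 := abs_ne_zero.2 (hdetH_ne (T x))
      have h4 : pu (H (T x)) ≠ 0 := (hpu_pos _).ne'
      field_simp
    simp only [hF, hG, hratio]
  -- gradient is zero iff fderiv is zero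
  have grad_iff : ∀ (φ : EuclideanSpace ℝ (Fin D) → ℝ) (x), gradient φ x = 0 ↔ fderiv ℝ φ x = 0 := by
    intro φ x
    unfold gradient
    exact LinearIsometryEquiv.map_eq_zero_iff _
  -- key pointwise equivalence
  have key : ∀ x, gradient G x = 0 ↔ gradient F (T x) = 0 := by
    intro x
    by_cases hdiff : DifferentiableAt ℝ F (T x)
    · have hc : fderiv ℝ G x = (fderiv ℝ F (T x)).comp (fderiv ℝ T x) := by
        have : G = F ∘ T := funext hGF
        rw [this]
        exact fderiv_comp x hdiff (hTd x)
      rw [grad_iff, grad_iff, hc]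
      constructor
      · intro h0
        have h1 : ((fderiv ℝ F (T x)).comp (fderiv ℝ T x)).comp (fderiv ℝ Tinv (T x)) = 0 := by
          rw [h0, ContinuousLinearMap.zero_comp]
        rw [ContinuousLinearMap.comp_assoc] at h1
        have h2 := hcomp T Tinv hTright hTd hTinvd (T x)
        rw [hTleft x] at h2
        rw [h2, ContinuousLinearMap.comp_id] at h1
        exact h1
      · intro h0; rw [h0, ContinuousLinearMap.zero_comp]
    · have hdiffG : ¬ DifferentiableAt ℝ G x := by
        intro hGd
        apply hdiff
        have hFe : F = G ∘ Tinv := by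
          funext y
          simp only [Function.comp_apply, hGF (Tinv y), hTright y]
        rw [hFe]
        have hGd' : DifferentiableAt ℝ G (Tinv (T x)) := by rw [hTleft x]; exact hGd
        exact hGd'.comp (T x) (hTinvd (T x))
      rw [grad_iff, grad_iff, fderiv_zero_of_not_differentiableAt hdiff,
        fderiv_zero_of_not_differentiableAt hdiffG]
  -- continuity / measurability facts
  have hpxj_cont : Continuous pxj := by
    have : pxj = fun y => px (Tinv y) * |(fderiv ℝ Tinv y).det| := funext hpxj
    rw [this]
    exact (hpx_smooth.continuous.comp hTinv.continuous).mul
      ((ContinuousLinearMap.continuous_det.comp (hTinv.continuous_fderiv two_ne_zero)).abs)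
  have hgradF_meas : Measurable (fun y => gradient F y) := by
    unfold gradient
    exact (LinearIsometryEquiv.continuous _).measurable.comp (measurable_fderiv ℝ F)
  have hgradG_meas : Measurable (fun x => gradient G x) := by
    unfold gradient
    exact (LinearIsometryEquiv.continuous _).measurable.comp (measurable_fderiv ℝ G)
  have hmeasL : Measurable (fun y => ENNReal.ofReal (pxj y * ((1 : ℝ) / 2) *
      ‖gradient F y‖ ^ 2)) := by
    apply Measurable.ennreal_ofReal
    exact ((hpxj_cont.measurable.mul_const _).mul (hgradF_meas.norm.pow_const 2))
  have hmeasR : Measurable (fun x => ENNReal.ofReal (px x * ((1 : ℝ) / 2) *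
      ‖gradient G x‖ ^ 2)) := by
    apply Measurable.ennreal_ofReal
    exact ((hpx_smooth.continuous.measurable.mul_const _).mul (hgradG_meas.norm.pow_const 2))
  -- pointwise vanishing lemma
  have point_iff : ∀ (p : ℝ) (v : EuclideanSpace ℝ (Fin D)), 0 < p →
      (ENNReal.ofReal (p * ((1 : ℝ) / 2) * ‖v‖ ^ 2) = 0 ↔ v = 0) := by
    intro p v hp
    rw [ENNReal.ofReal_eq_zero]
    constructor
    · intro h
      have h2 : ‖v‖ ^ 2 ≤ 0 := by
        by_contra hcon
        push_neg at hcon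
        nlinarith
      have : ‖v‖ ^ 2 = 0 := le_antisymm h2 (by positivity)
      simpa [pow_eq_zero_iff] using this
    · intro h; simp [h]
  -- change of variables for the LHS
  have hCoV : (∫⁻ y, ENNReal.ofReal (pxj y * ((1 : ℝ) / 2) * ‖gradient F y‖ ^ 2)) =
      ∫⁻ x, ENNReal.ofReal |(fderiv ℝ T x).det| *
        ENNReal.ofReal (pxj (T x) * ((1 : ℝ) / 2) * ‖gradient F (T x)‖ ^ 2) := by
    have himg : T '' Set.univ = Set.univ := by
      rw [Set.image_univ]
      exact Set.range_eq_univ.2 hTright.surjective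
    have := lintegral_image_eq_lintegral_abs_det_fderiv_mul (volume : Measure (EuclideanSpace ℝ (Fin D)))
      MeasurableSet.univ
      (fun x _ => ((hTd x).hasFDerivAt).hasFDerivWithinAt)
      (hTleft.injective.injOn)
      (fun y => ENNReal.ofReal (pxj y * ((1 : ℝ) / 2) * ‖gradient F y‖ ^ 2))
    rw [himg, setLIntegral_univ, setLIntegral_univ] at this
    exact this
  rw [hCoV]
  have hmeasL' : Measurable (fun x => ENNReal.ofReal |(fderiv ℝ T x).det| *
      ENNReal.ofReal (pxj (T x) * ((1 : ℝ) / 2) * ‖gradient F (T x)‖ ^ 2)) :=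
    ((ContinuousLinearMap.continuous_det.comp
      (hT.continuous_fderiv two_ne_zero)).abs.measurable.ennreal_ofReal).mul
      (hmeasL.comp hT.continuous.measurable)
  rw [lintegral_eq_zero_iff hmeasL', lintegral_eq_zero_iff hmeasR]
  constructor
  · intro h
    filter_upwards [h] with x hx
    simp only [Pi.zero_apply] at hx ⊢
    rcases mul_eq_zero.1 hx with h1 | h2
    · rw [ENNReal.ofReal_eq_zero] at h1
      exact absurd h1 (not_le.2 (abs_pos.2 (hdetT_ne x)))
    · have := (point_iff _ _ (hpxj_pos (T x))).1 h2
      rw [(key x).2 this]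
      simp
  · intro h
    filter_upwards [h] with x hx
    simp only [Pi.zero_apply] at hx ⊢
    have hg0 : gradient G x = 0 := (point_iff _ _ (hpx_pos x)).1 hx
    have hf0 : gradient F (T x) = 0 := (key x).1 hg0
    rw [hf0]
    simp
end

section
/- Fix integers D, p ≥ 1, a set Θ ⊆ ℝ^p, a point x ∈ ℝ^D, and nonnegative reals L1(x), L2(x), L3(x). Let s : ℝ^D × Θ → ℝ^D be such that for each θ ∈ Θ the map y ↦ s(y;θ) is differentiable, with Jacobian matrix ∂s(x;θ) at x whose i-th column is the partial derivative ∂_i s(x;θ). Define f(x;θ) = (1/2)·‖s(x;θ)‖² + tr(∂s(x;θ)). Assume that for all θ, θ1, θ2 ∈ Θ and all i ∈ {1,…,D}: ‖s(x;θ)‖ ≤ L1(x), ‖s(x;θ1) − s(x;θ2)‖ ≤ L2(x)·‖θ1 − θ2‖, and ‖∂_i s(x;θ1) − ∂_i s(x;θ2)‖ ≤ L3(x)·‖θ1 − θ2‖. Then for all θ1, θ2 ∈ Θ: |f(x;θ1) − f(x;θ2)| ≤ (L1(x)·L2(x) + D·√D·L3(x))·‖θ1 − θ2‖. -/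
theorem coord_le_norm {D : ℕ} (y : EuclideanSpace ℝ (Fin D)) (i : Fin D) : |y i| ≤ ‖y‖ := by
  have h := abs_real_inner_le_norm (EuclideanSpace.single i (1:ℝ)) y
  rw [EuclideanSpace.inner_single_left] at h
  simpa [EuclideanSpace.norm_single] using h

theorem trace_eq {D : ℕ} (A : EuclideanSpace ℝ (Fin D) →ₗ[ℝ] EuclideanSpace ℝ (Fin D)) :
    LinearMap.trace ℝ _ A = ∑ i, A (EuclideanSpace.single i 1) i := by
  rw [LinearMap.trace_eq_matrix_trace ℝ (EuclideanSpace.basisFun (Fin D) ℝ).toBasis, Matrix.trace]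
  simp [Matrix.diag, LinearMap.toMatrix_apply, EuclideanSpace.basisFun_apply]

/-- **Lemma A1 (Lipschitzness of the pointwise score-matching objective).**
If, at a fixed point `x`, the score `s(x;θ)` is bounded by `L1`, Lipschitz in `θ`
with constant `L2`, and each column `∂_i s(x;θ)` of its Jacobian is Lipschitz in `θ`
with constant `L3`, then `f(x;θ) = ½‖s(x;θ)‖² + tr(∂s(x;θ))` is Lipschitz in `θ`
with constant `L1·L2 + D·√D·L3`. -/
theorem stmt_4 {D p : ℕ} (hD : 1 ≤ D) (hp : 1 ≤ p)
    (Θ : Set (EuclideanSpace ℝ (Fin p)))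
    (x : EuclideanSpace ℝ (Fin D))
    (L1 L2 L3 : ℝ) (hL1 : 0 ≤ L1) (hL2 : 0 ≤ L2) (hL3 : 0 ≤ L3)
    (s : EuclideanSpace ℝ (Fin p) → EuclideanSpace ℝ (Fin D) → EuclideanSpace ℝ (Fin D))
    (hdiff : ∀ θ ∈ Θ, Differentiable ℝ (s θ))
    (f : EuclideanSpace ℝ (Fin p) → ℝ)
    (hf : ∀ θ, f θ = (1 / 2) * ‖s θ x‖ ^ 2 +
      LinearMap.trace ℝ (EuclideanSpace ℝ (Fin D)) (fderiv ℝ (s θ) x).toLinearMap)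
    (hb1 : ∀ θ ∈ Θ, ‖s θ x‖ ≤ L1)
    (hb2 : ∀ θ1 ∈ Θ, ∀ θ2 ∈ Θ, ‖s θ1 x - s θ2 x‖ ≤ L2 * ‖θ1 - θ2‖)
    (hb3 : ∀ θ1 ∈ Θ, ∀ θ2 ∈ Θ, ∀ i : Fin D,
      ‖fderiv ℝ (s θ1) x (EuclideanSpace.single i 1) -
        fderiv ℝ (s θ2) x (EuclideanSpace.single i 1)‖ ≤ L3 * ‖θ1 - θ2‖) :
    ∀ θ1 ∈ Θ, ∀ θ2 ∈ Θ,
      |f θ1 - f θ2| ≤ (L1 * L2 + D * Real.sqrt D * L3) * ‖θ1 - θ2‖ := by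
  intro θ1 h1 θ2 h2
  rw [hf θ1, hf θ2, trace_eq, trace_eq]
  -- quadratic term bound
  have hq : |(1/2) * ‖s θ1 x‖ ^ 2 - (1/2) * ‖s θ2 x‖ ^ 2| ≤ L1 * L2 * ‖θ1 - θ2‖ := by
    have : (1/2) * ‖s θ1 x‖ ^ 2 - (1/2) * ‖s θ2 x‖ ^ 2
        = (1/2) * ((‖s θ1 x‖ - ‖s θ2 x‖) * (‖s θ1 x‖ + ‖s θ2 x‖)) := by ring
    rw [this, abs_mul, abs_mul]
    have ha : |‖s θ1 x‖ - ‖s θ2 x‖| ≤ L2 * ‖θ1 - θ2‖ :=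
      (abs_norm_sub_norm_le _ _).trans (hb2 θ1 h1 θ2 h2)
    have hb : |‖s θ1 x‖ + ‖s θ2 x‖| ≤ 2 * L1 := by
      rw [abs_of_nonneg (by positivity)]
      linarith [hb1 θ1 h1, hb1 θ2 h2]
    calc |(1/2:ℝ)| * (|‖s θ1 x‖ - ‖s θ2 x‖| * |‖s θ1 x‖ + ‖s θ2 x‖|)
        ≤ (1/2) * ((L2 * ‖θ1 - θ2‖) * (2 * L1)) := by
          rw [abs_of_nonneg (by norm_num : (0:ℝ) ≤ 1/2)]
          gcongr <;> positivity
      _ = L1 * L2 * ‖θ1 - θ2‖ := by ring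
  -- trace term bound
  have ht : |(∑ i, (fderiv ℝ (s θ1) x).toLinearMap (EuclideanSpace.single i 1) i)
      - ∑ i, (fderiv ℝ (s θ2) x).toLinearMap (EuclideanSpace.single i 1) i|
      ≤ D * L3 * ‖θ1 - θ2‖ := by
    rw [← Finset.sum_sub_distrib]
    refine (Finset.abs_sum_le_sum_abs _ _).trans ?_
    have : ∀ i : Fin D, |(fderiv ℝ (s θ1) x).toLinearMap (EuclideanSpace.single i 1) i
        - (fderiv ℝ (s θ2) x).toLinearMap (EuclideanSpace.single i 1) i| ≤ L3 * ‖θ1 - θ2‖ := by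
      intro i
      have := coord_le_norm (fderiv ℝ (s θ1) x (EuclideanSpace.single i 1)
        - fderiv ℝ (s θ2) x (EuclideanSpace.single i 1)) i
      simp only [PiLp.sub_apply] at this
      exact this.trans (hb3 θ1 h1 θ2 h2 i)
    calc ∑ i, |(fderiv ℝ (s θ1) x).toLinearMap (EuclideanSpace.single i 1) i
        - (fderiv ℝ (s θ2) x).toLinearMap (EuclideanSpace.single i 1) i|
        ≤ ∑ _i : Fin D, L3 * ‖θ1 - θ2‖ := Finset.sum_le_sum (fun i _ => this i)
      _ = D * L3 * ‖θ1 - θ2‖ := by simp [mul_assoc]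
  have hD3 : (D:ℝ) * L3 * ‖θ1 - θ2‖ ≤ D * Real.sqrt D * L3 * ‖θ1 - θ2‖ := by
    have h1' : (1:ℝ) ≤ Real.sqrt D := by
      rw [show (1:ℝ) = Real.sqrt 1 by simp]
      exact Real.sqrt_le_sqrt (by exact_mod_cast hD)
    have : (D:ℝ) * L3 ≤ (D:ℝ) * Real.sqrt D * L3 := by nlinarith [mul_nonneg (Nat.cast_nonneg (α := ℝ) D) hL3]
    exact mul_le_mul_of_nonneg_right this (norm_nonneg _)
  calc |_| ≤ |(1/2) * ‖s θ1 x‖ ^ 2 - (1/2) * ‖s θ2 x‖ ^ 2|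
        + |(∑ i, (fderiv ℝ (s θ1) x).toLinearMap (EuclideanSpace.single i 1) i)
        - ∑ i, (fderiv ℝ (s θ2) x).toLinearMap (EuclideanSpace.single i 1) i| := by
          rw [show ((1/2) * ‖s θ1 x‖ ^ 2 + ∑ i, (fderiv ℝ (s θ1) x).toLinearMap (EuclideanSpace.single i 1) i)
            - ((1/2) * ‖s θ2 x‖ ^ 2 + ∑ i, (fderiv ℝ (s θ2) x).toLinearMap (EuclideanSpace.single i 1) i)
            = ((1/2) * ‖s θ1 x‖ ^ 2 - (1/2) * ‖s θ2 x‖ ^ 2)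
            + ((∑ i, (fderiv ℝ (s θ1) x).toLinearMap (EuclideanSpace.single i 1) i)
            - ∑ i, (fderiv ℝ (s θ2) x).toLinearMap (EuclideanSpace.single i 1) i) by ring]
          exact abs_add_le _ _
    _ ≤ L1 * L2 * ‖θ1 - θ2‖ + D * Real.sqrt D * L3 * ‖θ1 - θ2‖ := by
        exact add_le_add hq (ht.trans hD3)
    _ = (L1 * L2 + D * Real.sqrt D * L3) * ‖θ1 - θ2‖ := by ring
end
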